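/- With the parameter choices c_min = 0, c_max = 2 and λ = 1 (so c(h) = 2/(1 + exp(h - τ))), the margin-adaptive weight w is differentiable at every point of ℝ \ {0, -τ}, and its derivative is uniformly bounded there: there exists L_w > 0 such that |w'(h)| ≤ L_w for every h ∈ ℝ with h ≠ 0 and h ≠ -τ. -/

import Mathlib

/-- The logistic sigmoid function. -/
noncomputable def sigma (x : ℝ) : ℝ := 1 / (1 + Real.exp (-x))

/-- The coefficient function with `c_min = 0`, `c_max = 2`, `λ = 1`. -/
noncomputable def coef2 (τ h : ℝ) : ℝ := 2 / (1 + Real.exp (h - τ))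

/-- The margin-adaptive weight with `c_min = 0`, `c_max = 2`, `λ = 1`. -/
noncomputable def madw2 (τ h : ℝ) : ℝ :=
  if h > -τ then sigma (coef2 τ |h| * h) / sigma h else 1

lemma one_add_exp_pos (x : ℝ) : 0 < 1 + Real.exp x := by positivity

lemma sigma_pos (x : ℝ) : 0 < sigma x := by unfold sigma; positivity

lemma sigma_le_one (x : ℝ) : sigma x ≤ 1 := by
  unfold sigma
  rw [div_le_one (one_add_exp_pos _)]
  linarith [Real.exp_pos (-x)]

lemma hasDerivAt_sigma (x : ℝ) :
    HasDerivAt sigma (sigma x * (1 - sigma x)) x := by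
  have h1 : HasDerivAt (fun y : ℝ => 1 + Real.exp (-y)) (-Real.exp (-x)) x := by
    simpa using ((Real.hasDerivAt_exp (-x)).comp x (hasDerivAt_neg x)).const_add 1
  have h2 := (hasDerivAt_const x (1:ℝ)).div h1 (one_add_exp_pos (-x)).ne'
  refine h2.congr_deriv ?_
  unfold sigma
  field_simp
  ring

lemma one_div_sigma (x : ℝ) : 1 / sigma x = 1 + Real.exp (-x) := by
  unfold sigma; rw [one_div_one_div]

/-- Key bound lemma: if G has a derivative bounded by `2 + 2e^τ` at `x > -τ`,
then `σ(G·)/σ` has derivative bounded by `(3+2e^τ)(1+e^τ)²` at `x`. -/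
lemma quotient_bound (τ x : ℝ) (G : ℝ → ℝ) (g' : ℝ)
    (hx : -τ < x) (hG : HasDerivAt G g' x) (hg' : |g'| ≤ 2 + 2 * Real.exp τ) :
    ∃ D, HasDerivAt (fun y => sigma (G y) / sigma y) D x ∧
      |D| ≤ (3 + 2 * Real.exp τ) * (1 + Real.exp τ) ^ 2 := by
  set s := sigma x with hs
  set a := sigma (G x) with ha
  have hF : HasDerivAt (fun y => sigma (G y) / sigma y)
      (((a * (1 - a) * g') * s - a * (s * (1 - s))) / s ^ 2) x :=
    (((hasDerivAt_sigma (G x)).comp x hG).div (hasDerivAt_sigma x) (sigma_pos x).ne')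
  refine ⟨_, hF, ?_⟩
  have hs1 : 0 < s := sigma_pos x
  have hs2 : s ≤ 1 := sigma_le_one x
  have ha1 : 0 < a := sigma_pos (G x)
  have ha2 : a ≤ 1 := sigma_le_one (G x)
  have he : 0 < Real.exp τ := Real.exp_pos τ
  -- 1/s ≤ 1 + e^τ
  have hsinv : 1 / s ≤ 1 + Real.exp τ := by
    rw [hs, one_div_sigma]
    have : Real.exp (-x) ≤ Real.exp τ := Real.exp_le_exp.mpr (by linarith)
    linarith
  have hs3 : 1 ≤ s * (1 + Real.exp τ) := by
    rw [div_le_iff₀ hs1] at hsinv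
    linarith [hsinv]
  -- numerator bound
  have hnum : |(a * (1 - a) * g') * s - a * (s * (1 - s))| ≤ 3 / 4 + Real.exp τ / 2 := by
    have h1 : |(a * (1 - a) * g') * s| ≤ (2 + 2 * Real.exp τ) / 4 := by
      rw [abs_mul, abs_mul]
      have e1 : |a * (1 - a)| ≤ 1 / 4 := by
        rw [abs_of_nonneg (mul_nonneg ha1.le (by linarith))]
        nlinarith [sq_nonneg (a - 1 / 2)]
      have e2 : |s| ≤ 1 := by rw [abs_of_pos hs1]; exact hs2
      have e3 := mul_le_mul e1 hg' (abs_nonneg g') (by norm_num)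
      have e4 : (0:ℝ) ≤ |a * (1 - a)| * |g'| := mul_nonneg (abs_nonneg _) (abs_nonneg _)
      nlinarith [abs_nonneg s]
    have h2 : |a * (s * (1 - s))| ≤ 1 / 4 := by
      rw [abs_of_nonneg (mul_nonneg ha1.le (mul_nonneg hs1.le (by linarith)))]
      nlinarith [sq_nonneg (s - 1 / 2), mul_nonneg hs1.le (by linarith : (0:ℝ) ≤ 1 - s)]
    calc |(a * (1 - a) * g') * s - a * (s * (1 - s))|
        ≤ |(a * (1 - a) * g') * s| + |a * (s * (1 - s))| := abs_sub _ _
      _ ≤ 3 / 4 + Real.exp τ / 2 := by linarith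
  rw [abs_div, abs_of_pos (by positivity : (0:ℝ) < s ^ 2), div_le_iff₀ (by positivity)]
  nlinarith [hs3, sq_nonneg (1 + Real.exp τ), sq_nonneg (s * (1 + Real.exp τ) - 1), hnum]

lemma hasDerivAt_pos_branch (τ x : ℝ) (hx : 0 < x) :
    ∃ g', HasDerivAt (fun y => coef2 τ y * y) g' x ∧ |g'| ≤ 2 + 2 * Real.exp τ := by
  set E := Real.exp (x - τ) with hE
  have hEpos : 0 < E := Real.exp_pos _
  have h1 : HasDerivAt (fun y : ℝ => 1 + Real.exp (y - τ)) E x := by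
    simpa using ((Real.hasDerivAt_exp (x - τ)).comp x ((hasDerivAt_id x).sub_const τ)).const_add 1
  have h2 := (hasDerivAt_const x (2:ℝ)).div h1 (one_add_exp_pos (x - τ)).ne'
  set q := 2 * x * E / (1 + E) ^ 2 with hq
  set r := 2 / (1 + E) with hr
  have h4 : HasDerivAt (fun y => coef2 τ y * y) (-q + r) x := by
    simp only [coef2]
    refine (h2.mul (hasDerivAt_id x)).congr_deriv ?_
    simp only [id_eq, Pi.div_apply, ← hE]
    rw [hq, hr]; ring
  refine ⟨-q + r, h4, ?_⟩
  have hq1 : 0 ≤ q := by positivity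
  have hq2 : q ≤ 2 * Real.exp τ := by
    rw [hq, div_le_iff₀ (by positivity)]
    have e1 : x ≤ Real.exp x := by linarith [Real.add_one_le_exp x]
    have e2 : Real.exp x = Real.exp τ * E := by rw [hE, ← Real.exp_add]; ring_nf
    nlinarith [Real.exp_pos τ]
  have hr1 : 0 < r := by positivity
  have hr2 : r ≤ 2 := by
    rw [hr, div_le_iff₀ (one_add_exp_pos _)]; linarith
  rw [abs_le]; constructor <;> linarith

lemma hasDerivAt_neg_branch (τ x : ℝ) (hx : x < 0) :
    ∃ g', HasDerivAt (fun y => coef2 τ (-y) * y) g' x ∧ |g'| ≤ 2 + 2 * Real.exp τ := by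
  set E := Real.exp (-x - τ) with hE
  have hEpos : 0 < E := Real.exp_pos _
  have h1 : HasDerivAt (fun y : ℝ => 1 + Real.exp (-y - τ)) (-E) x := by
    simpa using ((Real.hasDerivAt_exp (-x - τ)).comp x
      ((hasDerivAt_neg x).sub_const τ)).const_add 1
  have h2 := (hasDerivAt_const x (2:ℝ)).div h1 (one_add_exp_pos (-x - τ)).ne'
  set q := 2 * (-x) * E / (1 + E) ^ 2 with hq
  set r := 2 / (1 + E) with hr
  have h4 : HasDerivAt (fun y => coef2 τ (-y) * y) (-q + r) x := by
    simp only [coef2]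
    refine (h2.mul (hasDerivAt_id x)).congr_deriv ?_
    simp only [id_eq, Pi.div_apply, ← hE]
    rw [hq, hr]; ring
  refine ⟨-q + r, h4, ?_⟩
  have hq1 : 0 ≤ q := by
    apply div_nonneg _ (by positivity)
    nlinarith
  have hq2 : q ≤ 2 * Real.exp τ := by
    rw [hq, div_le_iff₀ (by positivity)]
    have e1 : -x ≤ Real.exp (-x) := by linarith [Real.add_one_le_exp (-x)]
    have e2 : Real.exp (-x) = Real.exp τ * E := by rw [hE, ← Real.exp_add]; ring_nf
    nlinarith [Real.exp_pos τ]
  have hr1 : 0 < r := by positivity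
  have hr2 : r ≤ 2 := by
    rw [hr, div_le_iff₀ (one_add_exp_pos _)]; linarith
  rw [abs_le]; constructor <;> linarith

lemma madw2_key (τ : ℝ) (hτ : 0 < τ) (h : ℝ) (h0 : h ≠ 0) (hτ' : h ≠ -τ) :
    ∃ D, HasDerivAt (madw2 τ) D h ∧
      |D| ≤ (3 + 2 * Real.exp τ) * (1 + Real.exp τ) ^ 2 := by
  rcases lt_trichotomy h (-τ) with hlt | heq | hgt
  · refine ⟨0, (hasDerivAt_const h (1:ℝ)).congr_of_eventuallyEq ?_, by simp; positivity⟩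
    filter_upwards [Iio_mem_nhds hlt] with y hy
    simp [madw2, not_lt.mpr (le_of_lt (Set.mem_Iio.mp hy))]
  · exact absurd heq hτ'
  · rcases h0.lt_or_gt with hneg | hpos
    · -- -τ < h < 0
      obtain ⟨g', hG, hg'⟩ := hasDerivAt_neg_branch τ h hneg
      obtain ⟨D, hD, hDb⟩ := quotient_bound τ h _ g' hgt hG hg'
      refine ⟨D, hD.congr_of_eventuallyEq ?_, hDb⟩
      filter_upwards [Ioo_mem_nhds hgt hneg] with y hy
      rw [madw2, if_pos hy.1, abs_of_neg hy.2]
    · -- h > 0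
      obtain ⟨g', hG, hg'⟩ := hasDerivAt_pos_branch τ h hpos
      obtain ⟨D, hD, hDb⟩ := quotient_bound τ h _ g' hgt hG hg'
      refine ⟨D, hD.congr_of_eventuallyEq ?_, hDb⟩
      filter_upwards [Ioi_mem_nhds hpos] with y hy
      rw [madw2, if_pos (by have := Set.mem_Ioi.mp hy; linarith : y > -τ), abs_of_pos (Set.mem_Ioi.mp hy)]

/-- With `c_min = 0`, `c_max = 2`, `λ = 1`, the margin-adaptive weight `w` is
differentiable at every point of `ℝ \ {0, -τ}`, and its derivative is uniformly
bounded there. -/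
theorem madw2_differentiable_bounded_deriv (τ : ℝ) (hτ : 0 < τ) :
    (∀ h : ℝ, h ≠ 0 → h ≠ -τ → DifferentiableAt ℝ (madw2 τ) h) ∧
    ∃ L : ℝ, 0 < L ∧ ∀ h : ℝ, h ≠ 0 → h ≠ -τ → |deriv (madw2 τ) h| ≤ L := by
  constructor
  · intro h h0 hτ'
    obtain ⟨D, hD, _⟩ := madw2_key τ hτ h h0 hτ'
    exact hD.differentiableAt
  · refine ⟨(3 + 2 * Real.exp τ) * (1 + Real.exp τ) ^ 2, by positivity, ?_⟩
    intro h h0 hτ'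
    obtain ⟨D, hD, hb⟩ := madw2_key τ hτ h h0 hτ'
    rw [hD.deriv]
    exact hb
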